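/- Suppose f ∈ H^1 on the unit circle (f ≠ 0) factors as f = B g² with B a Blaschke product and g ∈ H^1, and suppose z^{-k} f(z) ≥ 0 a.e. on the circle for a nonnegative integer k. Then conj(g) = B g z^{-k} a.e. on the circle, and consequently both g and Bg are polynomials of degree at most k. -/

import Mathlib

open MeasureTheory Complex Real AddCircle
open scoped Real ENNReal ComplexConjugate BigOperators

noncomputable section

instance : Fact (0 < 2 * π) := ⟨by positivity⟩

/-- Normalized Haar measure on the circle `AddCircle (2π)`. -/
abbrev circleMeasure : Measure (AddCircle (2 * π)) := haarAddCircle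

open Filter


lemma my_norm_fourier (n : ℤ) (z : AddCircle (2*π)) : ‖fourier n z‖ = 1 := Circle.norm_coe _

lemma my_fourierCoeff_congr {φ ψ : AddCircle (2*π) → ℂ} (h : φ =ᵐ[haarAddCircle] ψ) (n : ℤ) :
    fourierCoeff φ n = fourierCoeff ψ n := by
  unfold fourierCoeff
  exact integral_congr_ae (by filter_upwards [h] with z hz; rw [hz])

lemma my_fourierCoeff_conj (φ : AddCircle (2*π) → ℂ) (n : ℤ) :
    fourierCoeff (fun z => conj (φ z)) n = conj (fourierCoeff φ (-n)) := by
  unfold fourierCoeff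
  rw [← integral_conj]
  congr 1; ext z
  rw [smul_eq_mul, smul_eq_mul, map_mul, ← fourier_neg, neg_neg]

lemma my_fourierCoeff_mul_fourier (φ : AddCircle (2*π) → ℂ) (m n : ℤ) :
    fourierCoeff (fun z => φ z * fourier m z) n = fourierCoeff φ (n - m) := by
  unfold fourierCoeff
  congr 1; ext z
  have h : fourier (-(n-m)) z = fourier (-n) z * fourier m z := by
    rw [← fourier_add]; congr 1; ring
  rw [smul_eq_mul, smul_eq_mul, h]; ring

lemma my_integral_fourier (m : ℤ) :
    (∫ z : AddCircle (2*π), fourier m z ∂haarAddCircle) = if m = 0 then 1 else 0 := by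
  split_ifs with h
  · subst h
    simp_rw [fourier_zero]
    simp
  · exact integral_eq_zero_of_add_right_eq_neg
      (fourier_add_half_inv_index h (by positivity) )

lemma my_fourierCoeff_fourier (j i : ℤ) :
    fourierCoeff (fun z : AddCircle (2*π) => fourier j z) i = if i = j then 1 else 0 := by
  unfold fourierCoeff
  have h : ∀ z : AddCircle (2*π), fourier (-i) z • fourier j z = fourier (-i + j) z := by
    intro z; rw [fourier_add, smul_eq_mul]
  simp_rw [h, my_integral_fourier]
  congr 1
  simp [eq_comm, neg_add_eq_zero]

lemma my_parseval (φ ψ : AddCircle (2*π) → ℂ) (hφ : MemLp φ 2 haarAddCircle)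
    (hψ : MemLp ψ 2 haarAddCircle) :
    ∫ z, conj (φ z) * ψ z ∂haarAddCircle
      = ∑' i : ℤ, conj (fourierCoeff φ i) * fourierCoeff ψ i := by
  set X := hφ.toLp φ
  set Y := hψ.toLp ψ
  have h1 : (∫ z, conj (φ z) * ψ z ∂haarAddCircle) = @inner ℂ _ _ X Y := by
    rw [MeasureTheory.L2.inner_def]
    refine integral_congr_ae ?_
    filter_upwards [hφ.coeFn_toLp, hψ.coeFn_toLp] with z h1 h2
    rw [RCLike.inner_apply, h1, h2, mul_comm]
  have h2 : ∀ i : ℤ, fourierBasis.repr X i = fourierCoeff φ i := by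
    intro i
    rw [fourierBasis_repr]
    exact integral_congr_ae (by filter_upwards [hφ.coeFn_toLp] with z hz; rw [hz])
  have h3 : ∀ i : ℤ, fourierBasis.repr Y i = fourierCoeff ψ i := by
    intro i
    rw [fourierBasis_repr]
    exact integral_congr_ae (by filter_upwards [hψ.coeFn_toLp] with z hz; rw [hz])
  rw [h1, ← fourierBasis.tsum_inner_mul_inner X Y]
  refine tsum_congr fun i => ?_
  rw [← fourierBasis.repr_apply_apply Y i, h3, ← inner_conj_symm,
    ← fourierBasis.repr_apply_apply X i, h2]

lemma my_memLp_conj (φ : AddCircle (2*π) → ℂ) (hφ : MemLp φ 2 haarAddCircle) :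
    MemLp (fun z => conj (φ z)) 2 haarAddCircle := by
  have hm : AEStronglyMeasurable (fun z => conj (φ z)) haarAddCircle :=
    Complex.continuous_conj.comp_aestronglyMeasurable hφ.1
  rw [memLp_two_iff_integrable_sq_norm hm]
  exact ((memLp_two_iff_integrable_sq_norm hφ.1).1 hφ).congr
    (Eventually.of_forall fun z => by simp)

lemma my_memLp_mul_fourier (ψ : AddCircle (2*π) → ℂ) (hψ : MemLp ψ 2 haarAddCircle) (m : ℤ) :
    MemLp (fun z => ψ z * fourier m z) 2 haarAddCircle := by
  have hm : AEStronglyMeasurable (fun z => ψ z * fourier m z) haarAddCircle :=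
    hψ.1.mul (map_continuous (fourier m)).aestronglyMeasurable
  rw [memLp_two_iff_integrable_sq_norm hm]
  exact ((memLp_two_iff_integrable_sq_norm hψ.1).1 hψ).congr
    (Eventually.of_forall fun z => by simp [norm_mul, Circle.norm_coe])

lemma my_coeFn_sum {ι : Type*} (s : Finset ι) (F : ι → Lp ℂ 2 (haarAddCircle : Measure (AddCircle (2*π)))) :
    ⇑(∑ i ∈ s, F i) =ᵐ[haarAddCircle] fun z => ∑ i ∈ s, F i z := by
  classical
  induction s using Finset.induction_on with
  | empty => simp only [Finset.sum_empty]; exact Lp.coeFn_zero (E := ℂ) (p := 2) (μ := haarAddCircle)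
  | insert a s hnot ih =>
    rw [Finset.sum_insert hnot]
    filter_upwards [Lp.coeFn_add (F a) (∑ i ∈ s, F i), ih] with z h1 h2
    rw [h1]
    simp only [Pi.add_apply, h2, Finset.sum_insert hnot]

lemma my_poly (φ : AddCircle (2*π) → ℂ) (hφ : MemLp φ 2 haarAddCircle) (k : ℕ)
    (h0 : ∀ n : ℤ, n < 0 → fourierCoeff φ n = 0)
    (h1 : ∀ n : ℤ, (k:ℤ) < n → fourierCoeff φ n = 0) :
    ∀ᵐ z ∂haarAddCircle, φ z = ∑ j : Fin (k+1), fourierCoeff φ (j:ℤ) * fourier (j:ℤ) z := by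
  classical
  set c : Fin (k+1) → ℂ := fun j => fourierCoeff φ (j:ℤ) with hc
  set X := hφ.toLp φ with hX
  set Q : Lp ℂ 2 (haarAddCircle : Measure (AddCircle (2*π))) :=
    ∑ j : Fin (k+1), c j • (fourierBasis ((j:ℕ):ℤ)) with hQ
  have hrX : ∀ i : ℤ, fourierBasis.repr X i = fourierCoeff φ i := by
    intro i
    rw [fourierBasis_repr]
    exact integral_congr_ae (by filter_upwards [hφ.coeFn_toLp] with z hz; rw [hz])
  have hXQ : X = Q := by
    apply fourierBasis.repr.injective
    apply lp.ext
    funext i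
    rw [hQ, map_sum]
    simp_rw [_root_.map_smul]
    rw [lp.coeFn_sum]
    simp only [Finset.sum_apply]
    have hterm : ∀ j : Fin (k+1),
        (c j • fourierBasis.repr (fourierBasis (T := 2*π) ((j:ℕ):ℤ))) i
          = if i = ((j:ℕ):ℤ) then c j else 0 := by
      intro j
      rw [fourierBasis.repr_self]
      rw [lp.coeFn_smul, Pi.smul_apply, lp.single_apply]
      simp [Pi.single_apply]
    simp_rw [hterm, hrX]
    by_cases hik : 0 ≤ i ∧ i ≤ (k:ℤ)
    · set j0 : Fin (k+1) := ⟨i.toNat, by omega⟩ with hj0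
      have hij0 : i = ((j0:ℕ):ℤ) := by simp [hj0]; omega
      rw [Finset.sum_eq_single j0]
      · rw [if_pos hij0]
        exact congrArg (fourierCoeff φ) hij0
      · intro j _ hj
        rw [if_neg]
        intro hcon
        apply hj
        apply Fin.ext
        omega
      · intro hcon; exact absurd (Finset.mem_univ j0) hcon
    · rw [Finset.sum_eq_zero]
      · push_neg at hik
        rcases lt_or_ge i 0 with h | h
        · exact h0 i h
        · exact h1 i (hik h)
      · intro j _
        rw [if_neg]
        intro hcon
        push_neg at hik
        have hj1 : (j:ℤ) ≤ (k:ℤ) := by exact_mod_cast Int.ofNat_le.mpr (Nat.lt_succ_iff.mp j.2)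
        omega
  have hQfn : ⇑Q =ᵐ[haarAddCircle] fun z => ∑ j : Fin (k+1), c j * fourier ((j:ℕ):ℤ) z := by
    have hterm : ∀ j : Fin (k+1), (⇑(c j • (fourierBasis ((j:ℕ):ℤ) : Lp ℂ 2 (haarAddCircle : Measure (AddCircle (2*π)))))) =ᵐ[haarAddCircle] fun z => c j * fourier ((j:ℕ):ℤ) z := by
      intro j
      have h2 : ⇑(fourierBasis (T := 2*π) ((j:ℕ):ℤ)) =ᵐ[haarAddCircle] fourier ((j:ℕ):ℤ) := by
        rw [show (fourierBasis (T := 2*π) ((j:ℕ):ℤ) : Lp ℂ 2 _) = fourierLp 2 ((j:ℕ):ℤ) from congrFun coe_fourierBasis _]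
        exact coeFn_fourierLp 2 _
      filter_upwards [Lp.coeFn_smul (c j) (fourierBasis ((j:ℕ):ℤ) : Lp ℂ 2 (haarAddCircle : Measure (AddCircle (2*π)))), h2] with z hz1 hz2
      rw [hz1, Pi.smul_apply, hz2, smul_eq_mul]
    have hall := (ae_all_iff.2 hterm)
    filter_upwards [my_coeFn_sum Finset.univ (fun j : Fin (k+1) => c j • (fourierBasis ((j:ℕ):ℤ) : Lp ℂ 2 (haarAddCircle : Measure (AddCircle (2*π))))), hall] with z hz1 hz2
    rw [hQ, hz1]
    exact Finset.sum_congr rfl fun j _ => hz2 j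
  filter_upwards [hφ.coeFn_toLp, hQfn] with z hz1 hz2
  rw [show (MemLp.toLp φ hφ) = Q from hXQ, hz2] at hz1
  rw [← hz1]


lemma my_coeff_mul_neg (φ ψ : AddCircle (2*π) → ℂ) (hφ : MemLp φ 2 haarAddCircle)
    (hψ : MemLp ψ 2 haarAddCircle)
    (hφH : ∀ n : ℤ, n < 0 → fourierCoeff φ n = 0)
    (hψH : ∀ n : ℤ, n < 0 → fourierCoeff ψ n = 0)
    (n : ℤ) (hn : n < 0) : fourierCoeff (fun z => φ z * ψ z) n = 0 := by
  have key : fourierCoeff (fun z => φ z * ψ z) n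
      = ∫ z, conj ((fun z => conj (φ z)) z) * ((fun z => ψ z * fourier (-n) z) z) ∂haarAddCircle := by
    unfold fourierCoeff
    refine integral_congr_ae (Eventually.of_forall fun z => ?_)
    simp only [smul_eq_mul, Complex.conj_conj]
    ring
  rw [key, my_parseval _ _ (my_memLp_conj φ hφ) (my_memLp_mul_fourier ψ hψ (-n))]
  have hz : ∀ i : ℤ, conj (fourierCoeff (fun z => conj (φ z)) i)
      * fourierCoeff (fun z => ψ z * fourier (-n) z) i = 0 := by
    intro i
    rw [my_fourierCoeff_conj, my_fourierCoeff_mul_fourier, Complex.conj_conj]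
    rcases le_or_gt i 0 with h | h
    · rw [hψH _ (by omega), mul_zero]
    · rw [hφH _ (by omega), zero_mul]
  simp_rw [hz]
  exact tsum_zero



/-- Suppose `f ∈ H¹` on the circle, `f ≠ 0`, factors as `f = B g²` with
`B` an inner function (in particular a Blaschke product: `|B| = 1` a.e. and
`spec B ⊆ [0,∞)`) and `g ∈ H¹`, and suppose `z^{-k} f(z) ≥ 0` a.e. on the circle. Then
`conj g = B g z^{-k}` a.e., and consequently both `g` and `B g` are (a.e. equal to)
polynomials of degree at most `k`. -/
theorem stmt11 (k : ℕ) (f g B : AddCircle (2 * π) → ℂ)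
    (hf1 : Integrable f circleMeasure) (hg1 : Integrable g circleMeasure)
    (hfH : ∀ n : ℤ, n < 0 → fourierCoeff f n = 0)
    (hgH : ∀ n : ℤ, n < 0 → fourierCoeff g n = 0)
    (hBmeas : AEStronglyMeasurable B circleMeasure)
    (hBmod : ∀ᵐ z ∂circleMeasure, ‖B z‖ = 1)
    (hBH : ∀ n : ℤ, n < 0 → fourierCoeff B n = 0)
    (hfac : ∀ᵐ z ∂circleMeasure, f z = B z * (g z) ^ 2)
    (hf0 : ¬ (∀ᵐ z ∂circleMeasure, f z = 0))
    (hpos : ∀ᵐ z ∂circleMeasure, ∃ c : ℝ, 0 ≤ c ∧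
      conj (fourier (k : ℤ) z) * f z = (c : ℂ)) :
    (∀ᵐ z ∂circleMeasure, conj (g z) = B z * g z * conj (fourier (k : ℤ) z))
      ∧ (∃ c : Fin (k + 1) → ℂ,
          ∀ᵐ z ∂circleMeasure, g z = ∑ j, c j * fourier (j : ℤ) z)
      ∧ (∃ d : Fin (k + 1) → ℂ,
          ∀ᵐ z ∂circleMeasure, B z * g z = ∑ j, d j * fourier (j : ℤ) z) := by
  -- `g` is in L²
  have hgf : ∀ᵐ z ∂circleMeasure, ‖f z‖ = ‖g z‖ ^ 2 := by
    filter_upwards [hfac, hBmod] with z h1 h2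
    rw [h1, norm_mul, h2, one_mul, norm_pow]
  have hg2 : MemLp g 2 (haarAddCircle : Measure (AddCircle (2*π))) := by
    rw [memLp_two_iff_integrable_sq_norm hg1.1]
    exact hf1.norm.congr hgf
  have hB2 : MemLp B 2 (haarAddCircle : Measure (AddCircle (2*π))) := by
    rw [memLp_two_iff_integrable_sq_norm hBmeas]
    refine (integrable_const (1:ℝ)).congr ?_
    filter_upwards [hBmod] with z h
    rw [h]; norm_num
  -- Part 1: the key pointwise identity
  have hnorm1 : ∀ u : ℂ, ‖u‖ = 1 → conj u * u = 1 := by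
    intro u hu
    rw [mul_comm, Complex.mul_conj, Complex.normSq_eq_norm_sq, hu]
    norm_num
  have hkey : ∀ᵐ z ∂circleMeasure, conj (g z) = B z * g z * conj (fourier (k:ℤ) z) := by
    filter_upwards [hfac, hBmod, hpos] with z hfz hBz hcz
    obtain ⟨c, hc0, hce⟩ := hcz
    set e := fourier (k:ℤ) z with hedef
    set b := B z
    set w := g z
    have he : conj e * e = 1 := hnorm1 e (my_norm_fourier _ _)
    have hb : conj b * b = 1 := hnorm1 b hBz
    have hce' : conj e * (b * w^2) = (c:ℂ) := by rw [← hfz]; exact hce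
    have E1 : e * (conj b * (conj w)^2) = (c:ℂ) := by
      have h := congrArg conj hce'
      simpa [map_mul, map_pow, Complex.conj_ofReal] using h
    have h3 : e * (conj b * (conj w)^2) = conj e * (b * w^2) := by rw [E1, hce']
    have E2 : (e * conj w - b * w) * (e * conj w + b * w) = 0 := by
      linear_combination (e * b) * h3 - (e^2 * (conj w)^2) * hb + (b^2 * w^2) * he
    rcases mul_eq_zero.mp E2 with h | h
    · linear_combination conj e * h - conj w * he
    · have hnsq : conj w * w = (Complex.normSq w : ℂ) := by
        rw [mul_comm, Complex.mul_conj]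
      have hcw : (c:ℂ) = ((-Complex.normSq w : ℝ) : ℂ) := by
        push_cast
        linear_combination (-1:ℂ) * hce' + (conj e * w) * h - (conj w * w) * he - hnsq
      have hc2 : c = -Complex.normSq w := Complex.ofReal_inj.mp hcw
      have hw0 : w = 0 := by
        have := Complex.normSq_nonneg w
        have : Complex.normSq w = 0 := by linarith
        exact Complex.normSq_eq_zero.mp this
      rw [hw0]
      simp
  -- coefficients of h := B * g
  have hh2 : MemLp (fun z => B z * g z) 2 (haarAddCircle : Measure (AddCircle (2*π))) := by
    have hm : AEStronglyMeasurable (fun z => B z * g z) circleMeasure := hBmeas.mul hg1.1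
    rw [memLp_two_iff_integrable_sq_norm hm]
    refine ((memLp_two_iff_integrable_sq_norm hg1.1).1 hg2).congr ?_
    filter_upwards [hBmod] with z h
    rw [norm_mul, h, one_mul]
  have hconjg : (fun z => conj (g z)) =ᵐ[(haarAddCircle : Measure (AddCircle (2*π)))]
      (fun z => (B z * g z) * fourier (-(k:ℤ)) z) := by
    filter_upwards [hkey] with z hz
    rw [hz, fourier_neg]
  have hrel : ∀ n : ℤ, fourierCoeff (fun z => B z * g z) (n + k) = conj (fourierCoeff g (-n)) := by
    intro n
    have h1 := my_fourierCoeff_congr hconjg n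
    rw [my_fourierCoeff_conj, my_fourierCoeff_mul_fourier] at h1
    have h2 : n + (k:ℤ) = n - -(k:ℤ) := by ring
    rw [h2, ← h1]
  have hhneg : ∀ n : ℤ, n < 0 → fourierCoeff (fun z => B z * g z) n = 0 := fun n hn =>
    my_coeff_mul_neg B g hB2 hg2 hBH hgH n hn
  have hhtop : ∀ n : ℤ, (k:ℤ) < n → fourierCoeff (fun z => B z * g z) n = 0 := by
    intro n hn
    have := hrel (n - k)
    rw [show n - (k:ℤ) + k = n by ring] at this
    rw [this, hgH _ (by omega), map_zero]
  have hgtop : ∀ n : ℤ, (k:ℤ) < n → fourierCoeff g n = 0 := by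
    intro n hn
    have := hrel (-n)
    rw [neg_neg] at this
    rw [hhneg _ (by omega)] at this
    have h0 := congrArg (starRingEnd ℂ) this
    simpa using h0.symm
  refine ⟨hkey, ?_, ?_⟩
  · exact ⟨fun j => fourierCoeff g (j:ℤ), my_poly g hg2 k hgH hgtop⟩
  · exact ⟨fun j => fourierCoeff (fun z => B z * g z) (j:ℤ),
      my_poly (fun z => B z * g z) hh2 k hhneg hhtop⟩
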